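/- Knopp's Lemma: Let B ⊆ [0,1) be a Lebesgue measurable set and 𝒞 a collection of subintervals of [0,1) such that (1) every open subinterval of [0,1) is an at most countable union of pairwise disjoint elements of 𝒞, and (2) there exists γ > 0 such that λ(A ∩ B) ≥ γ·λ(A) for all A ∈ 𝒞. Then λ(B) = 1. -/

import Mathlib

open MeasureTheory Set Filter Metric
open scoped ENNReal Topology

/-- Knopp's Lemma: if `B ⊆ [0,1)` is measurable, `𝒞` is a collection of subintervals of
`[0,1)` such that every open subinterval of `[0,1)` is an at most countable union of
pairwise disjoint members of `𝒞`, and `λ(A ∩ B) ≥ γ·λ(A)` for all `A ∈ 𝒞` with some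
`γ > 0`, then `λ(B) = 1`. -/
theorem stmt9 (B : Set ℝ) (hB : MeasurableSet B) (hBsub : B ⊆ Set.Ico 0 1)
    (𝒞 : Set (Set ℝ))
    (h𝒞 : ∀ A ∈ 𝒞, ∃ a b : ℝ, 0 ≤ a ∧ b ≤ 1 ∧ A = Set.Ico a b)
    (h1 : ∀ a b : ℝ, 0 ≤ a → a < b → b ≤ 1 →
      ∃ f : ℕ → Set ℝ, (∀ n, f n ∈ 𝒞 ∨ f n = ∅) ∧
        Pairwise (Function.onFun Disjoint f) ∧ Set.Ioo a b = ⋃ n, f n)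
    (γ : ℝ) (hγ : 0 < γ)
    (h2 : ∀ A ∈ 𝒞, ENNReal.ofReal γ * MeasureTheory.volume A
        ≤ MeasureTheory.volume (A ∩ B)) :
    MeasureTheory.volume B = 1 := by
  set γ' := min γ 1 with hγ'def
  have hγ'pos : 0 < γ' := lt_min hγ zero_lt_one
  have hγ'le : γ' ≤ 1 := min_le_right _ _
  set g := ENNReal.ofReal γ' with hg
  have hg0 : g ≠ 0 := by
    simp [hg, ENNReal.ofReal_eq_zero, not_le, hγ'pos]
  have hgle1 : g ≤ 1 := by
    rw [hg, ← ENNReal.ofReal_one]; exact ENNReal.ofReal_le_ofReal hγ'le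
  -- Step 1: the density bound for all open subintervals of [0,1]
  have key : ∀ a b : ℝ, 0 ≤ a → b ≤ 1 →
      g * volume (Set.Ioo a b) ≤ volume (Set.Ioo a b ∩ B) := by
    intro a b ha hb
    rcases le_or_gt b a with hab | hab
    · simp [Set.Ioo_eq_empty_of_le hab]
    obtain ⟨f, hf𝒞, hdisj, hunion⟩ := h1 a b ha hab hb
    have hfmeas : ∀ n, MeasurableSet (f n) := by
      intro n
      rcases hf𝒞 n with h | h
      · obtain ⟨a', b', _, _, heq⟩ := h𝒞 _ h; rw [heq]; exact measurableSet_Ico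
      · rw [h]; exact MeasurableSet.empty
    have hsum1 : volume (Set.Ioo a b) = ∑' n, volume (f n) := by
      rw [hunion]; exact measure_iUnion hdisj hfmeas
    have hsum2 : volume (Set.Ioo a b ∩ B) = ∑' n, volume (f n ∩ B) := by
      rw [hunion, Set.iUnion_inter]
      exact measure_iUnion
        (hdisj.mono fun _ _ h => Disjoint.mono inter_subset_left inter_subset_left h)
        (fun n => (hfmeas n).inter hB)
    rw [hsum1, hsum2, ← ENNReal.tsum_mul_left]
    refine ENNReal.tsum_le_tsum fun n => ?_
    rcases hf𝒞 n with h | h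
    · calc g * volume (f n) ≤ ENNReal.ofReal γ * volume (f n) :=
            mul_le_mul_left (ENNReal.ofReal_le_ofReal (min_le_left _ _)) _
        _ ≤ volume (f n ∩ B) := h2 _ h
    · simp [h]
  -- Step 2: the complement E has measure zero
  set E := Set.Ico (0:ℝ) 1 \ B with hEdef
  have hEmeas : MeasurableSet E := measurableSet_Ico.diff hB
  have hEzero : volume E = 0 := by
    by_contra hne
    have hd := Besicovitch.ae_tendsto_measure_inter_div_of_measurableSet
      (volume : Measure ℝ) hEmeas
    have hne0 : ∀ᵐ x : ℝ ∂volume, x ≠ 0 := by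
      refine (MeasureTheory.ae_iff).2 ?_
      have : {x : ℝ | ¬ x ≠ 0} = {0} := by ext x; simp
      rw [this]; exact Real.volume_singleton
    have hfreq : ∃ᵐ x : ℝ ∂volume, x ∈ E := by
      rw [MeasureTheory.frequently_ae_mem_iff]; exact hne
    obtain ⟨x, hxE, hx0, hxT⟩ := (hfreq.and_eventually (hne0.and hd)).exists
    have hx01 : x ∈ Set.Ioo (0:ℝ) 1 := ⟨lt_of_le_of_ne hxE.1.1 (Ne.symm hx0), hxE.1.2⟩
    have hxind : E.indicator (1 : ℝ → ℝ≥0∞) x = 1 := by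
      simp [Set.indicator_of_mem hxE]
    rw [hxind] at hxT
    -- eventually the density ratio is at most 1 - g
    have hub : ∀ᶠ r in 𝓝[>] (0:ℝ),
        volume (E ∩ closedBall x r) / volume (closedBall x r) ≤ 1 - g := by
      have hc : (0:ℝ) ∈ Set.Ico (0:ℝ) (min x (1 - x)) :=
        ⟨le_refl 0, lt_min hx01.1 (by linarith [hx01.2])⟩
      filter_upwards [Ioo_mem_nhdsGT_of_mem hc] with r hr
      have hr0 : 0 < r := hr.1
      have hrx : r < x := lt_of_lt_of_le hr.2 (min_le_left _ _)
      have hrx1 : r < 1 - x := lt_of_lt_of_le hr.2 (min_le_right _ _)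
      have hcb : closedBall x r = Set.Icc (x - r) (x + r) := Real.closedBall_eq_Icc
      have hvol : volume (closedBall x r) = ENNReal.ofReal (2 * r) := by
        rw [hcb, Real.volume_Icc]; ring_nf
      have hvolI : volume (Set.Ioo (x - r) (x + r)) = ENNReal.ofReal (2 * r) := by
        rw [Real.volume_Ioo]; ring_nf
      have hvne0 : volume (closedBall x r) ≠ 0 := by
        rw [hvol]; simp [ENNReal.ofReal_eq_zero, not_le]; linarith
      have hvnetop : volume (closedBall x r) ≠ ⊤ := by rw [hvol]; exact ENNReal.ofReal_ne_top
      -- key bound on the interval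
      have hkey := key (x - r) (x + r) (by linarith) (by linarith)
      rw [hvolI, ← hvol] at hkey
      -- E ∩ closedBall and Ioo ∩ B are disjoint subsets of closedBall
      have hdisj : Disjoint (E ∩ closedBall x r) (Set.Ioo (x - r) (x + r) ∩ B) := by
        refine Set.disjoint_left.2 fun y hy hy' => ?_
        exact hy.1.2 hy'.2
      have hsub : (E ∩ closedBall x r) ∪ (Set.Ioo (x - r) (x + r) ∩ B) ⊆ closedBall x r := by
        refine Set.union_subset inter_subset_right ?_
        refine (Set.inter_subset_left).trans ?_
        rw [hcb]; exact Set.Ioo_subset_Icc_self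
      have hadd : volume (E ∩ closedBall x r) + volume (Set.Ioo (x - r) (x + r) ∩ B)
          ≤ volume (closedBall x r) := by
        rw [← measure_union hdisj (measurableSet_Ioo.inter hB)]
        exact measure_mono hsub
      have hstep : volume (E ∩ closedBall x r) + g * volume (closedBall x r)
          ≤ volume (closedBall x r) := le_trans (add_le_add_right hkey _) hadd
      have hsplit : (1 - g) * volume (closedBall x r) + g * volume (closedBall x r)
          = volume (closedBall x r) := by
        rw [← add_mul, tsub_add_cancel_of_le hgle1, one_mul]
      have hle : volume (E ∩ closedBall x r) ≤ (1 - g) * volume (closedBall x r) := by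
        have hfin : g * volume (closedBall x r) ≠ ⊤ :=
          ENNReal.mul_ne_top (by rw [hg]; exact ENNReal.ofReal_ne_top) hvnetop
        exact (ENNReal.add_le_add_iff_right hfin).1 (by rw [hsplit]; exact hstep)
      rw [ENNReal.div_le_iff hvne0 hvnetop]
      exact hle.trans (le_of_eq rfl)
    have hle1 : (1 : ℝ≥0∞) ≤ 1 - g := le_of_tendsto hxT hub
    have : (1 : ℝ≥0∞) - g < 1 := ENNReal.sub_lt_self ENNReal.one_ne_top one_ne_zero hg0
    exact absurd (lt_of_le_of_lt hle1 this) (lt_irrefl _)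
  -- Conclusion
  have hcover : Set.Ico (0:ℝ) 1 ⊆ B ∪ E := fun x hx => by
    by_cases h : x ∈ B
    · exact Or.inl h
    · exact Or.inr ⟨hx, h⟩
  have h1le : (1:ℝ≥0∞) ≤ volume B := by
    calc (1:ℝ≥0∞) = volume (Set.Ico (0:ℝ) 1) := by simp [Real.volume_Ico]
      _ ≤ volume (B ∪ E) := measure_mono hcover
      _ ≤ volume B + volume E := measure_union_le _ _
      _ = volume B := by rw [hEzero, add_zero]
  have h2le : volume B ≤ 1 := by
    calc volume B ≤ volume (Set.Ico (0:ℝ) 1) := measure_mono hBsub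
      _ = 1 := by simp [Real.volume_Ico]
  exact le_antisymm h2le h1le
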